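/- Let Ω be a nonempty set and (f_n) a measure free martingale with finite ranges, generating partitions ℚ_n and algebras 𝒜_n. Then there exists a finitely additive probability measure P on the algebra 𝒜_∞ = ⋃_n 𝒜_n such that for every n and every atom Q ∈ ℚ_n with P(Q) > 0, Σ_{Q' ∈ ℚ_{n+1}, Q' ⊆ Q} f_{n+1}(Q') P(Q') = f_n(Q) P(Q), i.e., (f_n, 𝒜_n) is a martingale under P. -/

import Mathlib

/-- The atom of the partition generated by `f 0, ..., f n` containing `ω`. -/
def atomOf {Ω : Type*} (f : ℕ → Ω → ℝ) (n : ℕ) (ω : Ω) : Set Ω :=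
  {ω' | ∀ j ≤ n, f j ω' = f j ω}

/-- The algebra `𝒜ₙ` generated by `f 0, ..., f n`: the sets that are unions of
atoms of the partition generated by `f 0, ..., f n`. -/
def algLevel {Ω : Type*} (f : ℕ → Ω → ℝ) (n : ℕ) : Set (Set Ω) :=
  {A | ∀ ω ∈ A, atomOf f n ω ⊆ A}

/-- The algebra `𝒜_∞ = ⋃ₙ 𝒜ₙ`. -/
def algInf {Ω : Type*} (f : ℕ → Ω → ℝ) : Set (Set Ω) :=
  ⋃ n, algLevel f n

/-- `P` is a finitely additive probability measure on the algebra `𝒜`. -/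
def IsFAProb {Ω : Type*} (𝒜 : Set (Set Ω)) (P : Set Ω → ℝ) : Prop :=
  (∀ A ∈ 𝒜, 0 ≤ P A) ∧ P ∅ = 0 ∧ P Set.univ = 1 ∧
    ∀ A ∈ 𝒜, ∀ B ∈ 𝒜, Disjoint A B → P (A ∪ B) = P A + P B

/-- `(f, 𝒜ₙ)` is a measure free martingale: on each atom `Q` of `ℚₙ`, the
(constant) value of `f n` lies between the minimum and the maximum of
`f (n+1)` on `Q` (attained since `f (n+1)` has finite range). -/
def IsMeasureFreeMartingale {Ω : Type*} (f : ℕ → Ω → ℝ) : Prop :=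
  ∀ n (ω : Ω), (∃ ω₁ ∈ atomOf f n ω, f (n + 1) ω₁ ≤ f n ω) ∧
    (∃ ω₂ ∈ atomOf f n ω, f n ω ≤ f (n + 1) ω₂)

open Classical

lemma split_props (a b c : ℝ) (h1 : a ≤ c) (h2 : c ≤ b) :
    0 ≤ (if a = b then 1 else (b - c) / (b - a)) ∧
    (if a = b then 1 else (b - c) / (b - a)) ≤ 1 ∧
    (if a = b then 1 else (b - c) / (b - a)) * a +
      (1 - (if a = b then 1 else (b - c) / (b - a))) * b = c := by
  split_ifs with h
  · subst h
    refine ⟨zero_le_one, le_refl 1, by linarith⟩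
  · have hba : 0 < b - a := by
      rcases lt_or_eq_of_le (h1.trans h2) with h' | h'
      · linarith
      · exact absurd h' h
    have hbc : 0 ≤ b - c := by linarith
    refine ⟨by positivity, ?_, ?_⟩
    · rw [div_le_one hba]; linarith
    · field_simp
      ring

section MFM

variable {Ω : Type*}

lemma mem_atom_self (f : ℕ → Ω → ℝ) (n : ℕ) (ω : Ω) : ω ∈ atomOf f n ω :=
  fun _ _ => rfl

lemma atom_symm {f : ℕ → Ω → ℝ} {n : ℕ} {ω ω' : Ω} (h : ω' ∈ atomOf f n ω) :
    ω ∈ atomOf f n ω' := fun j hj => (h j hj).symm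

lemma atom_trans {f : ℕ → Ω → ℝ} {n : ℕ} {ω ω' ω'' : Ω} (h : ω' ∈ atomOf f n ω)
    (h' : ω'' ∈ atomOf f n ω') : ω'' ∈ atomOf f n ω :=
  fun j hj => (h' j hj).trans (h j hj)

lemma atomOf_anti {f : ℕ → Ω → ℝ} {m n : ℕ} (h : n ≤ m) (ω : Ω) :
    atomOf f m ω ⊆ atomOf f n ω := fun ω' hω' j hj => hω' j (hj.trans h)

lemma algLevel_mono {f : ℕ → Ω → ℝ} {m n : ℕ} (h : n ≤ m) :
    algLevel f n ⊆ algLevel f m := fun A hA ω hω =>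
  Set.Subset.trans (atomOf_anti h ω) (hA ω hω)

noncomputable def lval (L : List (ℝ × Ω)) (A : Set Ω) : ℝ :=
  (L.map (fun x => if x.2 ∈ A then x.1 else 0)).sum

variable (f : ℕ → Ω → ℝ) (hmfm : IsMeasureFreeMartingale f)

noncomputable def child (n : ℕ) (ω : Ω) : List (ℝ × Ω) :=
  let ω₁ := choose (hmfm n ω).1
  let ω₂ := choose (hmfm n ω).2
  let a := f (n + 1) ω₁
  let b := f (n + 1) ω₂
  let t := if a = b then 1 else (b - f n ω) / (b - a)
  [(t, ω₁), (1 - t, ω₂)]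

lemma child_mem {n : ℕ} {ω : Ω} :
    ∀ y ∈ child f hmfm n ω, y.2 ∈ atomOf f n ω := by
  intro y hy
  have h₁ := choose_spec (hmfm n ω).1
  have h₂ := choose_spec (hmfm n ω).2
  simp only [child, List.mem_cons, List.mem_singleton] at hy
  rcases hy with rfl | rfl | h
  · exact h₁.1
  · exact h₂.1
  · exact absurd h List.not_mem_nil

lemma child_nonneg {n : ℕ} {ω : Ω} : ∀ y ∈ child f hmfm n ω, 0 ≤ y.1 := by
  intro y hy
  obtain ⟨hm₁, hle⟩ := choose_spec (hmfm n ω).1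
  obtain ⟨hm₂, hge⟩ := choose_spec (hmfm n ω).2
  obtain ⟨h0, h1, _⟩ := split_props _ _ _ hle hge
  simp only [child, List.mem_cons, List.mem_singleton] at hy
  rcases hy with rfl | rfl | h
  · exact h0
  · simp only; linarith
  · exact absurd h List.not_mem_nil

lemma child_total (n : ℕ) (ω : Ω) :
    ((child f hmfm n ω).map Prod.fst).sum = 1 := by
  simp [child]

lemma child_exp (n : ℕ) (ω : Ω) :
    ((child f hmfm n ω).map (fun y => y.1 * f (n + 1) y.2)).sum = f n ω := by
  obtain ⟨hm₁, hle⟩ := choose_spec (hmfm n ω).1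
  obtain ⟨hm₂, hge⟩ := choose_spec (hmfm n ω).2
  obtain ⟨_, _, hsum⟩ := split_props _ _ _ hle hge
  simp only [child, List.map_cons, List.map_nil, List.sum_cons, List.sum_nil, add_zero]
  exact hsum

end MFM

section MFM2

variable {Ω : Type*} [Nonempty Ω] (f : ℕ → Ω → ℝ) (hmfm : IsMeasureFreeMartingale f)

noncomputable def mu : ℕ → List (ℝ × Ω)
  | 0 => [(1, Classical.arbitrary Ω)]
  | (n + 1) => (mu n).flatMap fun x => (child f hmfm n x.2).map fun y => (x.1 * y.1, y.2)

lemma sumMap_bind {α β : Type*} (L : List α) (g : α → List β) (h : β → ℝ) :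
    ((L.flatMap g).map h).sum = (L.map fun x => ((g x).map h).sum).sum := by
  induction L with
  | nil => simp
  | cons a L ih => simp [List.map_append, List.sum_append, ih]

lemma mu_succ_eval (h : ℝ × Ω → ℝ) (n : ℕ) :
    ((mu f hmfm (n + 1)).map h).sum =
      ((mu f hmfm n).map
        (fun x => ((child f hmfm n x.2).map (fun y => h (x.1 * y.1, y.2))).sum)).sum := by
  rw [show mu f hmfm (n + 1)
      = (mu f hmfm n).flatMap fun x => (child f hmfm n x.2).map fun y => (x.1 * y.1, y.2)
      from rfl, sumMap_bind]
  simp [List.map_map, Function.comp_def]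

lemma child_eval_const (n : ℕ) (ω : Ω) (c : ℝ) :
    ((child f hmfm n ω).map (fun y => c * y.1)).sum = c := by
  have := child_total f hmfm n ω
  rw [List.sum_map_mul_left, this, mul_one]

lemma child_eval_exp (n : ℕ) (ω : Ω) (c : ℝ) :
    ((child f hmfm n ω).map (fun y => c * y.1 * f (n + 1) y.2)).sum = c * f n ω := by
  have := child_exp f hmfm n ω
  calc ((child f hmfm n ω).map (fun y => c * y.1 * f (n + 1) y.2)).sum
      = ((child f hmfm n ω).map (fun y => c * (y.1 * f (n + 1) y.2))).sum := by
        congr 1; exact List.map_congr_left (fun y _ => by ring)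
    _ = c * f n ω := by rw [List.sum_map_mul_left, this]

lemma mu_nonneg (n : ℕ) : ∀ x ∈ mu f hmfm n, 0 ≤ x.1 := by
  induction n with
  | zero => intro x hx; simp only [mu, List.mem_singleton] at hx; simp [hx]
  | succ n ih =>
    intro x hx
    rw [show mu f hmfm (n + 1)
      = (mu f hmfm n).flatMap fun x => (child f hmfm n x.2).map fun y => (x.1 * y.1, y.2)
      from rfl] at hx
    simp only [List.mem_flatMap, List.mem_map] at hx
    obtain ⟨a, ha, y, hy, rfl⟩ := hx
    exact mul_nonneg (ih a ha) (child_nonneg f hmfm y hy)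

lemma lval_nonneg (n : ℕ) (A : Set Ω) : 0 ≤ lval (mu f hmfm n) A := by
  unfold lval
  apply List.sum_nonneg
  intro r hr
  simp only [List.mem_map] at hr
  obtain ⟨x, hx, rfl⟩ := hr
  by_cases h : x.2 ∈ A
  · simpa [h] using mu_nonneg f hmfm n x hx
  · simp [h]

lemma lval_univ (n : ℕ) : lval (mu f hmfm n) Set.univ = 1 := by
  induction n with
  | zero => simp [lval, mu]
  | succ n ih =>
    unfold lval at *
    rw [mu_succ_eval]
    rw [← ih]
    congr 1
    apply List.map_congr_left
    intro x _
    simp only [Set.mem_univ, if_true]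
    exact child_eval_const f hmfm n x.2 x.1

lemma lval_empty (n : ℕ) : lval (mu f hmfm n) ∅ = 0 := by
  simp [lval]

lemma lval_union (n : ℕ) {A B : Set Ω} (h : Disjoint A B) :
    lval (mu f hmfm n) (A ∪ B) = lval (mu f hmfm n) A + lval (mu f hmfm n) B := by
  unfold lval
  induction mu f hmfm n with
  | nil => simp
  | cons x L ih =>
    simp only [List.map_cons, List.sum_cons, ih]
    by_cases hA : x.2 ∈ A
    · have hB : x.2 ∉ B := fun hB => (Set.disjoint_left.mp h hA) hB
      have hAB : x.2 ∈ A ∪ B := Or.inl hA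
      simp only [if_pos hA, if_neg hB, if_pos hAB]
      ring
    · by_cases hB : x.2 ∈ B
      · have hAB : x.2 ∈ A ∪ B := Or.inr hB
        simp only [if_neg hA, if_pos hB, if_pos hAB]
        ring
      · have hAB : x.2 ∉ A ∪ B := by simp [hA, hB]
        simp only [if_neg hA, if_neg hB, if_neg hAB]
        ring

lemma lval_consistent {n : ℕ} {A : Set Ω} (hA : A ∈ algLevel f n) :
    lval (mu f hmfm (n + 1)) A = lval (mu f hmfm n) A := by
  unfold lval
  rw [mu_succ_eval]
  congr 1
  apply List.map_congr_left
  intro x _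
  by_cases hx : x.2 ∈ A
  · rw [if_pos hx]
    have h' : ∀ y ∈ child f hmfm n x.2, (if y.2 ∈ A then x.1 * y.1 else 0) = x.1 * y.1 :=
      fun y hy => if_pos (hA x.2 hx (child_mem f hmfm y hy))
    rw [List.map_congr_left h', child_eval_const f hmfm n x.2 x.1]
  · rw [if_neg hx]
    have : ∀ y ∈ child f hmfm n x.2, (if y.2 ∈ A then x.1 * y.1 else 0) = 0 := by
      intro y hy
      rw [if_neg]
      intro hyA
      exact hx (hA y.2 hyA (atom_symm (child_mem f hmfm y hy)))
    rw [List.map_congr_left this]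
    simp

lemma lval_stable {n : ℕ} {A : Set Ω} (hA : A ∈ algLevel f n) (k : ℕ) :
    lval (mu f hmfm (n + k)) A = lval (mu f hmfm n) A := by
  induction k with
  | zero => rfl
  | succ k ih =>
    have h' : A ∈ algLevel f (n + k) := algLevel_mono (Nat.le_add_right n k) hA
    rw [show n + (k + 1) = (n + k) + 1 from rfl, lval_consistent f hmfm h', ih]

lemma lval_ge {m n : ℕ} (h : n ≤ m) {A : Set Ω} (hA : A ∈ algLevel f n) :
    lval (mu f hmfm m) A = lval (mu f hmfm n) A := by
  obtain ⟨k, rfl⟩ := Nat.exists_eq_add_of_le h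
  exact lval_stable f hmfm hA k

end MFM2

section MFM3

variable {Ω : Type*} [Nonempty Ω] (f : ℕ → Ω → ℝ) (hmfm : IsMeasureFreeMartingale f)

lemma atomOf_mem_algLevel (n : ℕ) (ω : Ω) : atomOf f n ω ∈ algLevel f n :=
  fun _ h _ h' => atom_trans h h'

lemma inter_pre_mem (n : ℕ) (ω : Ω) (v : ℝ) :
    atomOf f n ω ∩ f (n + 1) ⁻¹' {v} ∈ algLevel f (n + 1) := by
  rintro ω'' ⟨hQ, hv⟩ ω''' h'''
  refine ⟨fun j hj => (h''' j (hj.trans (Nat.le_succ n))).trans (hQ j hj), ?_⟩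
  have : f (n + 1) ω''' = f (n + 1) ω'' := h''' (n + 1) le_rfl
  simpa [this] using hv

lemma algLevel_union {n : ℕ} {A B : Set Ω} (hA : A ∈ algLevel f n) (hB : B ∈ algLevel f n) :
    A ∪ B ∈ algLevel f n := by
  rintro ω (hω | hω)
  · exact (hA ω hω).trans Set.subset_union_left
  · exact (hB ω hω).trans Set.subset_union_right

lemma mart_core (n : ℕ) (ω : Ω) :
    ((mu f hmfm (n + 1)).map
      (fun x => if x.2 ∈ atomOf f n ω then x.1 * f (n + 1) x.2 else 0)).sum
    = f n ω * lval (mu f hmfm (n + 1)) (atomOf f n ω) := by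
  rw [lval_consistent f hmfm (atomOf_mem_algLevel f n ω)]
  rw [mu_succ_eval]
  unfold lval
  rw [← List.sum_map_mul_left]
  congr 1
  apply List.map_congr_left
  intro x _
  by_cases hx : x.2 ∈ atomOf f n ω
  · have h' : ∀ y ∈ child f hmfm n x.2,
        (if y.2 ∈ atomOf f n ω then x.1 * y.1 * f (n + 1) y.2 else 0)
          = x.1 * y.1 * f (n + 1) y.2 := by
      intro y hy
      exact if_pos (atom_trans hx (child_mem f hmfm y hy))
    rw [List.map_congr_left h', child_eval_exp f hmfm n x.2 x.1, if_pos hx, hx n le_rfl]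
    ring
  · have h' : ∀ y ∈ child f hmfm n x.2,
        (if y.2 ∈ atomOf f n ω then x.1 * y.1 * f (n + 1) y.2 else 0) = 0 := by
      intro y hy
      rw [if_neg]
      intro hyQ
      exact hx (atom_trans hyQ (atom_symm (child_mem f hmfm y hy)))
    rw [List.map_congr_left h', if_neg hx]
    simp

lemma sum_v (s : Finset ℝ) (Q : Set Ω) (g : Ω → ℝ) (L : List (ℝ × Ω))
    (hL : ∀ x ∈ L, g x.2 ∈ s) :
    ∑ v ∈ s, v * lval L (Q ∩ g ⁻¹' {v})
      = (L.map (fun x => if x.2 ∈ Q then x.1 * g x.2 else 0)).sum := by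
  induction L with
  | nil => simp [lval]
  | cons x L ih =>
    have hx : g x.2 ∈ s := hL x (List.mem_cons_self)
    have hL' : ∀ y ∈ L, g y.2 ∈ s := fun y hy => hL y (List.mem_cons_of_mem x hy)
    unfold lval at *
    simp only [List.map_cons, List.sum_cons]
    simp only [mul_add]
    rw [Finset.sum_add_distrib, ih hL']
    congr 1
    by_cases hQ : x.2 ∈ Q
    · trans (∑ v ∈ s, if g x.2 = v then v * x.1 else 0)
      · refine Finset.sum_congr rfl (fun v _ => ?_)
        by_cases hv : g x.2 = v
        · rw [if_pos hv, if_pos (show x.2 ∈ Q ∩ g ⁻¹' {v} from ⟨hQ, hv⟩)]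
        · rw [if_neg hv, if_neg (fun h : x.2 ∈ Q ∩ g ⁻¹' {v} => hv h.2), mul_zero]
      · rw [Finset.sum_ite_eq s (g x.2) (fun v => v * x.1), if_pos hx, if_pos hQ]
        ring
    · trans (∑ _v ∈ s, (0 : ℝ))
      · refine Finset.sum_congr rfl (fun v _ => ?_)
        rw [if_neg (fun h : x.2 ∈ Q ∩ g ⁻¹' {v} => hQ h.1), mul_zero]
      · rw [if_neg hQ]
        simp

end MFM3

section MFM4

variable {Ω : Type*} [Nonempty Ω] (f : ℕ → Ω → ℝ) (hmfm : IsMeasureFreeMartingale f)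

noncomputable def Pmeas : Set Ω → ℝ := fun A =>
  if h : ∃ n, A ∈ algLevel f n then lval (mu f hmfm (Nat.find h)) A else 0

lemma Pmeas_eq {n : ℕ} {A : Set Ω} (hA : A ∈ algLevel f n) :
    Pmeas f hmfm A = lval (mu f hmfm n) A := by
  have h : ∃ m, A ∈ algLevel f m := ⟨n, hA⟩
  rw [Pmeas, dif_pos h]
  exact (lval_ge f hmfm (Nat.find_min' h hA) (Nat.find_spec h)).symm

end MFM4


/-- A measure free martingale admits a finitely additive probability measure `P`
on `𝒜_∞` under which it is a martingale. -/
theorem measure_free_martingale_has_martingale_measure {Ω : Type*} [Nonempty Ω]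
    (f : ℕ → Ω → ℝ) (hfin : ∀ n, (Set.range (f n)).Finite)
    (hmfm : IsMeasureFreeMartingale f) :
    ∃ P : Set Ω → ℝ, IsFAProb (algInf f) P ∧
      ∀ n (ω : Ω), 0 < P (atomOf f n ω) →
        ∑ v ∈ (hfin (n + 1)).toFinset,
        v * P (atomOf f n ω ∩ f (n + 1) ⁻¹' {v}) = f n ω * P (atomOf f n ω) := by
  have hmem : ∀ A : Set Ω, A ∈ algInf f ↔ ∃ n, A ∈ algLevel f n := by
    intro A; simp [algInf, Set.mem_iUnion]
  refine ⟨Pmeas f hmfm, ⟨?_, ?_, ?_, ?_⟩, ?_⟩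
  · intro A hA
    obtain ⟨n, hn⟩ := (hmem A).mp hA
    rw [Pmeas_eq f hmfm hn]
    exact lval_nonneg f hmfm n A
  · have h0 : (∅ : Set Ω) ∈ algLevel f 0 := fun ω hω => absurd hω (Set.notMem_empty ω)
    rw [Pmeas_eq f hmfm h0]
    exact lval_empty f hmfm 0
  · have h0 : (Set.univ : Set Ω) ∈ algLevel f 0 := fun ω _ _ _ => trivial
    rw [Pmeas_eq f hmfm h0]
    exact lval_univ f hmfm 0
  · intro A hA B hB hd
    obtain ⟨n₁, hn₁⟩ := (hmem A).mp hA
    obtain ⟨n₂, hn₂⟩ := (hmem B).mp hB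
    set m := max n₁ n₂
    have hA' : A ∈ algLevel f m := algLevel_mono (le_max_left n₁ n₂) hn₁
    have hB' : B ∈ algLevel f m := algLevel_mono (le_max_right n₁ n₂) hn₂
    rw [Pmeas_eq f hmfm (algLevel_union f hA' hB'), Pmeas_eq f hmfm hA',
      Pmeas_eq f hmfm hB']
    exact lval_union f hmfm m hd
  · intro n ω _
    have hQ : atomOf f n ω ∈ algLevel f n := atomOf_mem_algLevel f n ω
    have hsum : ∀ v ∈ (hfin (n + 1)).toFinset,
        v * Pmeas f hmfm (atomOf f n ω ∩ f (n + 1) ⁻¹' {v})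
          = v * lval (mu f hmfm (n + 1)) (atomOf f n ω ∩ f (n + 1) ⁻¹' {v}) := by
      intro v _
      rw [Pmeas_eq f hmfm (inter_pre_mem f n ω v)]
    rw [Finset.sum_congr rfl hsum,
      sum_v (hfin (n + 1)).toFinset (atomOf f n ω) (f (n + 1)) (mu f hmfm (n + 1))
        (fun x _ => (hfin (n + 1)).mem_toFinset.mpr (Set.mem_range_self x.2)),
      mart_core f hmfm n ω, Pmeas_eq f hmfm hQ,
      ← lval_consistent f hmfm hQ]
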